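/- arXiv:1306.0290 — 5 statements merged into one kernel-verified Lean document; each statement's English description precedes it below -/
import Mathlib

section
/- For every positive integer n, the pushforward under the first-coordinate map x ↦ x₁ of the uniform probability measure on the n-dimensional closed unit ball {x ∈ ℝⁿ : Σᵢ xᵢ² ≤ 1} is absolutely continuous with respect to Lebesgue measure on ℝ, with density f_n(x) = Γ(n/2 + 1) / (Γ((n+1)/2) · √π) · (1 - x²)^((n-1)/2) on [-1, 1] and 0 outside [-1, 1]. -/
open Real MeasureTheory

/-- The density `f_n` of the first coordinate of a uniform random point in the
`n`-dimensional closed unit ball. -/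
noncomputable def ballCoordDensity (n : ℕ) (x : ℝ) : ℝ :=
  if x ∈ Set.Icc (-1 : ℝ) 1 then
    Real.Gamma ((n : ℝ) / 2 + 1) / (Real.Gamma (((n : ℝ) + 1) / 2) * Real.sqrt π) *
      (1 - x ^ 2) ^ (((n : ℝ) - 1) / 2)
  else 0

/-- The uniform probability measure on the `n`-dimensional closed unit ball:
Lebesgue measure restricted to the ball, normalized by the ball's volume. -/
noncomputable def uniformBall (n : ℕ) : Measure (EuclideanSpace ℝ (Fin n)) :=
  (volume (Metric.closedBall (0 : EuclideanSpace ℝ (Fin n)) 1))⁻¹ •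
    volume.restrict (Metric.closedBall (0 : EuclideanSpace ℝ (Fin n)) 1)

lemma sec_vol (m : ℕ) (r : ℝ) (hr : 0 ≤ r) :
    volume {y : Fin m → ℝ | ∑ j, (y j) ^ 2 ≤ r} =
      ENNReal.ofReal (Real.sqrt r ^ m * (Real.sqrt π ^ m / Real.Gamma (m / 2 + 1))) := by
  cases m with
  | zero =>
      have h1 : {y : Fin 0 → ℝ | ∑ j, (y j) ^ 2 ≤ r} = Set.univ := by
        ext y; simp [hr]
      rw [h1]
      simp [volume_pi, Measure.pi_univ, Real.Gamma_one]
  | succ m =>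
      have hS : MeasurableSet {y : Fin (m + 1) → ℝ | ∑ j, (y j) ^ 2 ≤ r} :=
        measurableSet_le (by fun_prop) measurable_const
      rw [← (EuclideanSpace.volume_preserving_symm_measurableEquiv_toLp (Fin (m + 1))).measure_preimage
        hS.nullMeasurableSet]
      have hset : (MeasurableEquiv.toLp 2 (Fin (m + 1) → ℝ)).symm ⁻¹'
          {y : Fin (m + 1) → ℝ | ∑ j, (y j) ^ 2 ≤ r} =
          Metric.closedBall (0 : EuclideanSpace ℝ (Fin (m + 1))) (Real.sqrt r) := by
        ext x
        simp only [Set.mem_preimage, Set.mem_setOf_eq, Metric.mem_closedBall, dist_zero_right,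
          EuclideanSpace.norm_eq, MeasurableEquiv.toLp_symm_apply,
          Real.norm_eq_abs, sq_abs]
        have hs : (0:ℝ) ≤ ∑ i, x i ^ 2 := Finset.sum_nonneg fun i _ => sq_nonneg _
        constructor
        · intro h; exact Real.sqrt_le_sqrt h
        · intro h
          calc ∑ i, x i ^ 2 = Real.sqrt (∑ i, x i ^ 2) ^ 2 := (Real.sq_sqrt hs).symm
            _ ≤ Real.sqrt r ^ 2 := pow_le_pow_left₀ (Real.sqrt_nonneg _) h 2
            _ = r := Real.sq_sqrt hr
      rw [hset, EuclideanSpace.volume_closedBall]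
      rw [ENNReal.ofReal_mul (by positivity), ENNReal.ofReal_pow (Real.sqrt_nonneg _)]
      simp


/-- For every positive integer `n`, the pushforward of the uniform probability measure on
the `n`-dimensional closed unit ball under the first-coordinate map is absolutely
continuous with respect to Lebesgue measure, with density `f_n`. -/
theorem map_uniformBall_firstCoord (n : ℕ) (hn : 0 < n) :
    Measure.map (fun x : EuclideanSpace ℝ (Fin n) => x ⟨0, hn⟩) (uniformBall n) =
      volume.withDensity (fun x => ENNReal.ofReal (ballCoordDensity n x)) := by
  obtain ⟨m, rfl⟩ : ∃ m, n = m + 1 := ⟨n - 1, (Nat.succ_pred_eq_of_pos hn).symm⟩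
  set B := Metric.closedBall (0 : EuclideanSpace ℝ (Fin (m + 1))) 1 with hBdef
  set c := volume B with hcdef
  set E := (MeasurableEquiv.toLp 2 (Fin (m + 1) → ℝ)).symm.trans
      (MeasurableEquiv.piFinSuccAbove (fun _ : Fin (m + 1) => ℝ) 0) with hEdef
  have hE : MeasurePreserving E volume volume :=
    (volume_preserving_piFinSuccAbove (fun _ : Fin (m + 1) => ℝ) 0).comp
      (EuclideanSpace.volume_preserving_symm_measurableEquiv_toLp _)
  have hcoord : Measurable (fun x : EuclideanSpace ℝ (Fin (m + 1)) => x ⟨0, hn⟩) :=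
    (measurable_pi_apply _).comp (WithLp.measurable_ofLp 2 _)
  -- value of c
  have hcval : c = ENNReal.ofReal (Real.sqrt π ^ (m + 1) /
      Real.Gamma ((m + 1 : ℕ) / 2 + 1)) := by
    rw [hcdef, hBdef, EuclideanSpace.volume_closedBall]
    simp
  have hA1 : (0:ℝ) < Real.Gamma (((m : ℝ) + 1) / 2 + 1) :=
    Real.Gamma_pos_of_pos (by positivity)
  have hc0 : c ≠ 0 := by
    rw [hcdef, hBdef]
    exact (Metric.measure_closedBall_pos volume _ one_pos).ne'
  -- the section volume function
  set G : ℝ → ENNReal := fun t => volume {y : Fin m → ℝ | ∑ j, (y j) ^ 2 ≤ 1 - t ^ 2}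
    with hGdef
  -- pointwise density identity
  have hpt : ∀ t : ℝ, c⁻¹ * G t = ENNReal.ofReal (ballCoordDensity (m + 1) t) := by
    intro t
    by_cases h1 : t ^ 2 ≤ 1
    · have h2 : (0:ℝ) ≤ 1 - t ^ 2 := by linarith
      have ht : t ∈ Set.Icc (-1 : ℝ) 1 := by
        rw [Set.mem_Icc]
        constructor <;> nlinarith
      have hGt := sec_vol m (1 - t ^ 2) h2
      show c⁻¹ * volume {y : Fin m → ℝ | ∑ j, (y j) ^ 2 ≤ 1 - t ^ 2} =
        ENNReal.ofReal (ballCoordDensity (m + 1) t)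
      rw [hGt, hcval, ← ENNReal.ofReal_inv_of_pos (by positivity), ← ENNReal.ofReal_mul
        (by positivity)]
      congr 1
      rw [ballCoordDensity, if_pos ht]
      have hrpow : (1 - t ^ 2) ^ ((((m : ℝ) + 1) - 1) / 2) = Real.sqrt (1 - t ^ 2) ^ m := by
        rw [show (((m : ℝ) + 1) - 1) / 2 = (1 / 2 : ℝ) * (m : ℕ) by push_cast; ring,
          Real.rpow_mul h2, Real.rpow_natCast, ← Real.sqrt_eq_rpow]
      push_cast
      rw [hrpow]
      have hB0 : Real.Gamma ((m : ℝ) / 2 + 1) ≠ 0 :=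
        (Real.Gamma_pos_of_pos (by positivity)).ne'
      have hB1 : Real.Gamma (((m : ℝ) + 1 + 1) / 2) = Real.Gamma ((m : ℝ) / 2 + 1) := by
        congr 1; ring
      rw [hB1, pow_succ]
      have hπ : Real.sqrt π ≠ 0 := by positivity
      field_simp
    · have hempty : {y : Fin m → ℝ | ∑ j, (y j) ^ 2 ≤ 1 - t ^ 2} = ∅ := by
        ext y
        simp only [Set.mem_setOf_eq, Set.mem_empty_iff_false, iff_false, not_le]
        have : (0:ℝ) ≤ ∑ j, (y j) ^ 2 := Finset.sum_nonneg fun i _ => sq_nonneg _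
        nlinarith
      have ht : t ∉ Set.Icc (-1 : ℝ) 1 := by
        rw [Set.mem_Icc]
        rintro ⟨ha, hb⟩; exact h1 (by nlinarith)
      show c⁻¹ * volume {y : Fin m → ℝ | ∑ j, (y j) ^ 2 ≤ 1 - t ^ 2} =
        ENNReal.ofReal (ballCoordDensity (m + 1) t)
      rw [hempty, ballCoordDensity, if_neg ht]
      simp
  -- main computation
  ext s hs
  rw [Measure.map_apply hcoord hs, withDensity_apply _ hs]
  rw [uniformBall, Measure.smul_apply, smul_eq_mul,
    Measure.restrict_apply (hcoord hs)]
  set A : Set (ℝ × (Fin m → ℝ)) :=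
    (s ×ˢ Set.univ) ∩ {p | p.1 ^ 2 + ∑ j, (p.2 j) ^ 2 ≤ 1} with hAdef
  have hA : MeasurableSet A :=
    (hs.prod MeasurableSet.univ).inter (measurableSet_le (by fun_prop) measurable_const)
  have hpre : (fun x : EuclideanSpace ℝ (Fin (m + 1)) => x ⟨0, hn⟩) ⁻¹' s ∩ B = E ⁻¹' A := by
    ext x
    simp only [hEdef, hAdef, Set.mem_inter_iff, Set.mem_preimage, hBdef, Metric.mem_closedBall,
      dist_zero_right, EuclideanSpace.norm_eq, MeasurableEquiv.trans_apply,
      MeasurableEquiv.piFinSuccAbove_apply, MeasurableEquiv.toLp_symm_apply,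
      Set.mem_prod, Set.mem_univ, and_true, Set.mem_setOf_eq,
      Real.norm_eq_abs, sq_abs, Fin.insertNthEquiv, Equiv.coe_fn_symm_mk, Fin.removeNth]
    have hsum := Fin.sum_univ_succAbove (fun i => x i ^ 2) 0
    have hzero : (⟨0, hn⟩ : Fin (m + 1)) = 0 := rfl
    rw [hzero]
    have hnonneg : (0:ℝ) ≤ ∑ i, x i ^ 2 := Finset.sum_nonneg fun i _ => sq_nonneg _
    constructor
    · rintro ⟨h1, h2⟩
      refine ⟨h1, ?_⟩
      rw [← hsum]
      calc ∑ i, x i ^ 2 = Real.sqrt (∑ i, x i ^ 2) ^ 2 := (Real.sq_sqrt hnonneg).symm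
        _ ≤ 1 ^ 2 := pow_le_pow_left₀ (Real.sqrt_nonneg _) h2 2
        _ = 1 := one_pow 2
    · rintro ⟨h1, h2⟩
      refine ⟨h1, ?_⟩
      rw [← hsum] at h2
      calc Real.sqrt (∑ i, x i ^ 2) ≤ Real.sqrt 1 := Real.sqrt_le_sqrt h2
        _ = 1 := Real.sqrt_one
  rw [hpre, hE.measure_preimage hA.nullMeasurableSet, Measure.volume_eq_prod,
    Measure.prod_apply hA]
  have hsec : ∀ t : ℝ, volume (Prod.mk t ⁻¹' A) = s.indicator G t := by
    intro t
    by_cases ht : t ∈ s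
    · have : Prod.mk t ⁻¹' A = {y : Fin m → ℝ | ∑ j, (y j) ^ 2 ≤ 1 - t ^ 2} := by
        ext y
        simp [hAdef, ht]
        constructor <;> intro h <;> linarith
      rw [this, Set.indicator_of_mem ht, hGdef]
    · have : Prod.mk t ⁻¹' A = ∅ := by
        ext y; simp [hAdef, ht]
      rw [this, Set.indicator_of_notMem ht]
      simp
  simp_rw [hsec]
  rw [lintegral_indicator hs, ← lintegral_const_mul' _ _ (ENNReal.inv_ne_top.mpr hc0)]
  exact lintegral_congr fun t => hpt t
end

section
/- For every positive integer n and every real t, the characteristic function of the random variable z = √(n+2) · x₁, where x₁ has density f_n, admits the series representation φ_{n,Z}(t) = ∫_{-√(n+2)}^{√(n+2)} g_n(z) e^{itz} dz = Σ_{k=0}^{∞} (−(n+2) t² / 4)^k · Γ(n/2 + 1) / (k! · Γ(n/2 + 1 + k)). -/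
open Real

/-- The density `g_n` of the rescaled variable `z = √(n+2) · x₁`. -/
noncomputable def rescaledDensity (n : ℕ) (z : ℝ) : ℝ :=
  if |z| ≤ Real.sqrt ((n : ℝ) + 2) then
    ballCoordDensity n (z / Real.sqrt ((n : ℝ) + 2)) / Real.sqrt ((n : ℝ) + 2)
  else 0

open MeasureTheory

lemma realBeta (a b : ℝ) (ha : 0 < a) (hb : 0 < b) :
    ∫ x in (0:ℝ)..1, x ^ (a-1) * (1-x) ^ (b-1) =
      Real.Gamma a * Real.Gamma b / Real.Gamma (a+b) := by
  have hI : Complex.betaIntegral a b =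
      ((∫ x in (0:ℝ)..1, x ^ (a-1) * (1-x) ^ (b-1) : ℝ) : ℂ) := by
    rw [Complex.betaIntegral, ← intervalIntegral.integral_ofReal]
    refine intervalIntegral.integral_congr fun x hx => ?_
    rw [Set.uIcc_of_le (by norm_num : (0:ℝ) ≤ 1)] at hx
    push_cast
    rw [Complex.ofReal_cpow hx.1, Complex.ofReal_cpow (by linarith [hx.2])]
    push_cast
    ring
  have h := Complex.Gamma_mul_Gamma_eq_betaIntegral
    (s := (a:ℂ)) (t := (b:ℂ)) (by simpa using ha) (by simpa using hb)
  rw [hI, ← Complex.ofReal_add, Complex.Gamma_ofReal, Complex.Gamma_ofReal,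
    Complex.Gamma_ofReal, ← Complex.ofReal_mul, ← Complex.ofReal_mul] at h
  have h' : Real.Gamma a * Real.Gamma b =
      Real.Gamma (a+b) * ∫ x in (0:ℝ)..1, x ^ (a-1) * (1-x) ^ (b-1) := by
    exact_mod_cast h
  rw [h', mul_comm, mul_div_assoc, div_self (Real.Gamma_pos_of_pos (by linarith : (0:ℝ) < a+b)).ne', mul_one]

lemma contAux {p : ℝ} (hp : 0 ≤ p) : Continuous fun x : ℝ => (1 - x^2) ^ p := by
  rw [continuous_iff_continuousAt]
  intro x
  exact (Real.continuousAt_rpow_const _ _ (Or.inr hp)).comp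
    ((continuous_const.sub (continuous_pow 2)).continuousAt)

lemma stepB (c : ℝ) {p : ℝ} (hp : 0 ≤ p) (a : ℝ) :
    ∫ x in (-1:ℝ)..1, c*(1-x^2)^p * Real.cos (a*x)
    = ∑' m : ℕ, c * ((-1)^m * a^(2*m) / ((2*m).factorial)) *
        ∫ x in (-1:ℝ)..1, x^(2*m)*(1-x^2)^p := by
  set F : ℕ → ℝ → ℝ :=
    fun m x => c*(1-x^2)^p * ((-1)^m * (a*x)^(2*m) / ((2*m).factorial)) with hFdef
  have hFc : ∀ m, Continuous (F m) := by
    intro m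
    exact (continuous_const.mul (contAux hp)).mul
      ((continuous_const.mul ((continuous_const.mul continuous_id).pow _)).div_const _)
  have hint : ∀ m, Integrable (F m) (volume.restrict (Set.Ioc (-1:ℝ) 1)) :=
    fun m => (hFc m).integrableOn_Ioc
  have hbound : ∀ m : ℕ, ∀ x ∈ Set.Ioc (-1:ℝ) 1,
      ‖F m x‖ ≤ |c| * (|a|^(2*m) / ((2*m).factorial)) := by
    intro m x hx
    have hx1 : |x| ≤ 1 := abs_le.2 ⟨hx.1.le, hx.2⟩
    have h0 : (0:ℝ) ≤ 1 - x^2 := by nlinarith [abs_le.1 hx1]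
    have h1 : (1:ℝ) - x^2 ≤ 1 := by nlinarith [sq_nonneg x]
    have hr0 : (0:ℝ) ≤ (1-x^2)^p := Real.rpow_nonneg h0 _
    have hr1 : (1-x^2)^p ≤ 1 := Real.rpow_le_one h0 h1 hp
    have hxp : |x|^(2*m) ≤ 1 := pow_le_one₀ (abs_nonneg x) hx1
    have hfac : (0:ℝ) < ((2*m).factorial : ℝ) := by positivity
    rw [Real.norm_eq_abs, hFdef]
    simp only
    rw [abs_mul, abs_mul, abs_div, abs_mul, abs_pow, abs_pow, abs_neg, abs_one, one_pow,
      one_mul, abs_of_nonneg hr0, Nat.abs_cast, abs_mul, mul_pow]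
    have key : |c| * (1-x^2)^p * (|a|^(2*m) * |x|^(2*m) / ((2*m).factorial))
        = |c| * (|a|^(2*m)/((2*m).factorial)) * ((1-x^2)^p * |x|^(2*m)) := by ring
    rw [key]
    have h3 : (1-x^2)^p * |x|^(2*m) ≤ 1 :=
      mul_le_one₀ hr1 (pow_nonneg (abs_nonneg x) _) hxp
    calc |c| * (|a|^(2*m)/((2*m).factorial)) * ((1-x^2)^p * |x|^(2*m))
        ≤ |c| * (|a|^(2*m)/((2*m).factorial)) * 1 :=
          mul_le_mul_of_nonneg_left h3 (by positivity)
      _ = |c| * (|a|^(2*m)/((2*m).factorial)) := mul_one _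
  have hintnorm : ∀ m : ℕ, ∫ x in Set.Ioc (-1:ℝ) 1, ‖F m x‖
      ≤ |c| * (|a|^(2*m) / ((2*m).factorial)) * 2 := by
    intro m
    have hvol : volume (Set.Ioc (-1:ℝ) 1) < ⊤ := by
      rw [Real.volume_Ioc]; exact ENNReal.ofReal_lt_top
    have h2 : ‖∫ x in Set.Ioc (-1:ℝ) 1, ‖F m x‖‖
        ≤ (|c| * (|a|^(2*m) / ((2*m).factorial))) * (volume (Set.Ioc (-1:ℝ) 1)).toReal := by
      refine norm_setIntegral_le_of_norm_le_const hvol fun x hx => ?_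
      rw [norm_norm]
      exact hbound m x hx
    rw [Real.norm_of_nonneg (integral_nonneg fun x => norm_nonneg _)] at h2
    have hvol2 : (volume (Set.Ioc (-1:ℝ) 1)).toReal = 2 := by
      rw [Real.volume_Ioc]; norm_num
    rw [hvol2] at h2
    exact h2
  have hsummable : Summable fun m : ℕ => |c| * (|a|^(2*m) / ((2*m).factorial)) * 2 := by
    have h0 : Summable (fun k : ℕ => |a|^k / (k.factorial : ℝ)) :=
      Real.summable_pow_div_factorial _
    have h1 : Summable (fun m : ℕ => |a|^(2*m) / ((2*m).factorial : ℝ)) :=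
      h0.comp_injective fun x y hxy => by omega
    exact (h1.mul_left _).mul_right _
  have hF_sum : Summable fun m => ∫ x, ‖F m x‖ ∂(volume.restrict (Set.Ioc (-1:ℝ) 1)) := by
    refine Summable.of_nonneg_of_le (fun m => integral_nonneg fun x => norm_nonneg _)
      (fun m => hintnorm m) hsummable
  have key := MeasureTheory.integral_tsum_of_summable_integral_norm hint hF_sum
  have hpt : ∀ x : ℝ, ∑' m, F m x = c*(1-x^2)^p * Real.cos (a*x) := by
    intro x
    rw [hFdef]
    simp only
    rw [tsum_mul_left, Real.cos_eq_tsum (a*x)]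
  have hterm : ∀ m : ℕ, ∫ x, F m x ∂(volume.restrict (Set.Ioc (-1:ℝ) 1))
      = c * ((-1)^m * a^(2*m) / ((2*m).factorial)) * ∫ x in (-1:ℝ)..1, x^(2*m)*(1-x^2)^p := by
    intro m
    rw [← intervalIntegral.integral_of_le (by norm_num : (-1:ℝ) ≤ 1),
      ← intervalIntegral.integral_const_mul]
    refine intervalIntegral.integral_congr fun x _ => ?_
    rw [hFdef]
    simp only
    rw [mul_pow]
    ring
  calc ∫ x in (-1:ℝ)..1, c*(1-x^2)^p * Real.cos (a*x)
      = ∫ x in Set.Ioc (-1:ℝ) 1, (∑' m, F m x) := by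
        rw [intervalIntegral.integral_of_le (by norm_num : (-1:ℝ) ≤ 1)]
        exact setIntegral_congr_fun measurableSet_Ioc fun x _ => (hpt x).symm
    _ = ∑' m, ∫ x, F m x ∂(volume.restrict (Set.Ioc (-1:ℝ) 1)) := key.symm
    _ = ∑' m, c * ((-1)^m * a^(2*m) / ((2*m).factorial)) *
          ∫ x in (-1:ℝ)..1, x^(2*m)*(1-x^2)^p := by
        exact tsum_congr hterm

lemma moment (n m : ℕ) (hn : 0 < n) :
    ∫ x in (-1:ℝ)..1, x^(2*m) * (1-x^2) ^ (((n:ℝ)-1)/2) =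
      Real.Gamma ((m:ℝ)+1/2) * Real.Gamma (((n:ℝ)+1)/2) / Real.Gamma ((n:ℝ)/2+1+m) := by
  set p : ℝ := ((n:ℝ)-1)/2 with hpdef
  have hp : 0 ≤ p := by
    have : (1:ℝ) ≤ n := by exact_mod_cast hn
    rw [hpdef]; linarith
  set f : ℝ → ℝ := fun x => x^(2*m) * (1-x^2) ^ p with hfdef
  have hcf : Continuous f := (continuous_pow _).mul (contAux hp)
  -- even symmetry
  have heven : ∫ x in (-1:ℝ)..1, f x = 2 * ∫ x in (0:ℝ)..1, f x := by
    have h1 : ∫ x in (0:ℝ)..1, f (-x) = ∫ x in (-1:ℝ)..(0:ℝ), f x := by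
      simpa using intervalIntegral.integral_comp_neg (a := 0) (b := 1) f
    have h2 : ∫ x in (0:ℝ)..1, f (-x) = ∫ x in (0:ℝ)..1, f x :=
      intervalIntegral.integral_congr fun x _ => by
        simp only [hfdef, Even.neg_pow (even_two_mul m), neg_sq]
    rw [← intervalIntegral.integral_add_adjacent_intervals
      (hcf.intervalIntegrable (-1) 0) (hcf.intervalIntegrable 0 1), ← h1, h2]
    ring
  -- substitution u = x^2
  set g : ℝ → ℝ := fun u => u ^ ((m:ℝ)-1/2) * (1-u) ^ p with hgdef
  have himg : (fun x : ℝ => x^2) '' Set.Ioo 0 1 = Set.Ioo 0 1 := by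
    ext u
    simp only [Set.mem_image, Set.mem_Ioo]
    constructor
    · rintro ⟨x, ⟨hx0, hx1⟩, rfl⟩
      exact ⟨by positivity, by nlinarith⟩
    · rintro ⟨hu0, hu1⟩
      have hs1 : Real.sqrt u < 1 := by
        rw [show (1:ℝ) = Real.sqrt 1 by simp]
        exact Real.sqrt_lt_sqrt hu0.le (by simpa using hu1)
      exact ⟨Real.sqrt u, ⟨Real.sqrt_pos.2 hu0, by simpa using hs1⟩, Real.sq_sqrt hu0.le⟩
  have hsub : ∫ u in Set.Ioo (0:ℝ) 1, g u
      = ∫ x in Set.Ioo (0:ℝ) 1, |2*x| • g (x^2) := by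
    nth_rewrite 1 [← himg]
    refine integral_image_eq_integral_abs_deriv_smul (f := fun x => x^2)
      (f' := fun x => 2*x) measurableSet_Ioo (fun x _ => ?_)
      (fun x hx y hy hxy => ?_) g
    · have := (hasDerivAt_pow 2 x).hasDerivWithinAt (s := Set.Ioo (0:ℝ) 1)
      simpa using this
    · have h : (x - y) * (x + y) = 0 := by linear_combination hxy
      rcases mul_eq_zero.1 h with h' | h'
      · linarith
      · exfalso; have := hx.1; have := hy.1; simp only [Set.mem_Ioo] at *; nlinarith
  have hpt : ∀ x ∈ Set.Ioo (0:ℝ) 1, |2*x| • g (x^2) = 2 * f x := by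
    intro x hx
    have hx0 : (0:ℝ) < x := hx.1
    have e1 : ((x:ℝ)^2) ^ ((m:ℝ)-1/2) = x ^ ((2:ℝ)*((m:ℝ)-1/2)) := by
      rw [← Real.rpow_natCast x 2, ← Real.rpow_mul hx0.le]
      norm_num
    have e2 : x * x ^ ((2:ℝ)*((m:ℝ)-1/2)) = x ^ (2*m) := by
      have hc : ((2:ℝ)*((m:ℝ)-1/2)) = ((2*m : ℕ):ℝ) - 1 := by push_cast; ring
      rw [hc, Real.rpow_sub hx0, Real.rpow_one, Real.rpow_natCast]
      field_simp
    simp only [hgdef, hfdef, smul_eq_mul, abs_of_pos (by linarith : (0:ℝ) < 2*x), e1]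
    calc 2*x * (x ^ ((2:ℝ)*((m:ℝ)-1/2)) * (1-x^2)^p)
        = 2 * ((x * x ^ ((2:ℝ)*((m:ℝ)-1/2))) * (1-x^2)^p) := by ring
      _ = 2 * (x^(2*m) * (1-x^2)^p) := by rw [e2]
  have hB : ∫ u in (0:ℝ)..1, g u = 2 * ∫ x in (0:ℝ)..1, f x := by
    rw [intervalIntegral.integral_of_le (by norm_num : (0:ℝ) ≤ 1),
        intervalIntegral.integral_of_le (by norm_num : (0:ℝ) ≤ 1),
        integral_Ioc_eq_integral_Ioo, integral_Ioc_eq_integral_Ioo, hsub,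
        setIntegral_congr_fun measurableSet_Ioo hpt, integral_const_mul]
  have hbeta := realBeta ((m:ℝ)+1/2) (p+1) (by positivity) (by positivity)
  rw [show ((m:ℝ)+1/2)-1 = (m:ℝ)-1/2 by ring, add_sub_cancel_right] at hbeta
  have hp1 : p + 1 = ((n:ℝ)+1)/2 := by rw [hpdef]; ring
  have hsum : (m:ℝ)+1/2+(p+1) = (n:ℝ)/2+1+(m:ℝ) := by rw [hpdef]; ring
  rw [hp1] at hbeta
  rw [show (m:ℝ)+1/2+(((n:ℝ)+1)/2) = (n:ℝ)/2+1+(m:ℝ) by ring] at hbeta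
  rw [heven, ← hB]
  exact hbeta

lemma stepA (n : ℕ) (hn : 0 < n) (t : ℝ) :
    ∫ z in (-(Real.sqrt ((n : ℝ) + 2)))..(Real.sqrt ((n : ℝ) + 2)),
        (rescaledDensity n z : ℂ) * Complex.exp (Complex.I * (t : ℂ) * (z : ℂ)) =
    ((∫ x in (-1:ℝ)..1,
        (Real.Gamma ((n:ℝ)/2+1) / (Real.Gamma (((n:ℝ)+1)/2) * Real.sqrt π)) *
          (1-x^2) ^ (((n:ℝ)-1)/2) *
          Real.cos (t * Real.sqrt ((n:ℝ)+2) * x) : ℝ) : ℂ) := by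
  set s : ℝ := Real.sqrt ((n:ℝ)+2) with hsdef
  have hs : 0 < s := Real.sqrt_pos.2 (by positivity)
  set c : ℝ := Real.Gamma ((n:ℝ)/2+1) / (Real.Gamma (((n:ℝ)+1)/2) * Real.sqrt π) with hcdef
  set p : ℝ := ((n:ℝ)-1)/2 with hpdef
  have hp : 0 ≤ p := by
    have : (1:ℝ) ≤ n := by exact_mod_cast hn
    rw [hpdef]; linarith
  set G : ℝ → ℝ := fun z => c * (1-(z/s)^2) ^ p / s with hGdef
  have hGcont : Continuous G := by
    exact (continuous_const.mul ((contAux hp).comp (continuous_id.div_const s))).div_const s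
  -- replace density by G
  have h1 : ∫ z in (-s)..s, (rescaledDensity n z : ℂ) * Complex.exp (Complex.I * t * z)
      = ∫ z in (-s)..s, (G z : ℂ) * Complex.exp (Complex.I * t * z) := by
    refine intervalIntegral.integral_congr fun z hz => ?_
    rw [Set.uIcc_of_le (by linarith : -s ≤ s)] at hz
    have hzs : |z| ≤ s := abs_le.2 ⟨hz.1, hz.2⟩
    have hmem : z / s ∈ Set.Icc (-1:ℝ) 1 := by
      constructor
      · rw [le_div_iff₀ hs]; nlinarith [abs_le.1 hzs]
      · rw [div_le_one hs]; exact (abs_le.1 hzs).2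
    congr 1
    rw [rescaledDensity, if_pos (by rw [← hsdef]; exact hzs), ballCoordDensity, if_pos hmem]
  rw [h1]
  -- split exp into cos + sin * I
  have h2 : ∀ z : ℝ, (G z : ℂ) * Complex.exp (Complex.I * t * z)
      = ((G z * Real.cos (t*z) : ℝ) : ℂ) + ((G z * Real.sin (t*z) : ℝ) : ℂ) * Complex.I := by
    intro z
    have : Complex.I * t * z = ((t*z : ℝ) : ℂ) * Complex.I := by push_cast; ring
    rw [this, Complex.exp_mul_I, ← Complex.ofReal_cos, ← Complex.ofReal_sin]
    push_cast
    ring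
  simp_rw [h2]
  have hi1 : IntervalIntegrable (fun z => ((G z * Real.cos (t*z) : ℝ) : ℂ)) volume (-s) s := by
    exact (Complex.continuous_ofReal.comp
      (hGcont.mul (Real.continuous_cos.comp (continuous_const.mul continuous_id)))).intervalIntegrable _ _
  have hi2 : IntervalIntegrable (fun z => ((G z * Real.sin (t*z) : ℝ) : ℂ) * Complex.I) volume (-s) s := by
    exact ((Complex.continuous_ofReal.comp
      (hGcont.mul (Real.continuous_sin.comp (continuous_const.mul continuous_id)))).mul
      continuous_const).intervalIntegrable _ _
  rw [intervalIntegral.integral_add hi1 hi2, intervalIntegral.integral_mul_const,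
    intervalIntegral.integral_ofReal, intervalIntegral.integral_ofReal]
  -- sin part vanishes
  have hodd : ∫ z in (-s)..s, G z * Real.sin (t*z) = 0 := by
    have hrw : ∀ x : ℝ, G (-x) * Real.sin (t * (-x)) = -(G x * Real.sin (t*x)) := by
      intro x
      have : G (-x) = G x := by rw [hGdef]; simp [neg_div, neg_sq]
      rw [this, mul_neg, Real.sin_neg, mul_neg]
    have h := intervalIntegral.integral_comp_neg (a := -s) (b := s)
      (fun z => G z * Real.sin (t*z))
    simp only [neg_neg] at h
    have h2' : ∫ x in (-s)..s, G (-x) * Real.sin (t * -x)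
        = - ∫ x in (-s)..s, G x * Real.sin (t*x) := by
      rw [← intervalIntegral.integral_neg]
      exact intervalIntegral.integral_congr fun x _ => hrw x
    have := h2'.symm.trans h
    linarith
  rw [hodd]
  simp only [Complex.ofReal_zero, zero_mul, add_zero]
  -- change of variables z = s * x in the cos integral
  rw [Complex.ofReal_inj]
  have hcv := intervalIntegral.integral_comp_mul_left (a := -1) (b := 1)
    (fun z => G z * Real.cos (t*z)) hs.ne'
  simp only [mul_neg_one, mul_one, smul_eq_mul] at hcv
  have hpt : ∀ x : ℝ, c*(1-x^2)^p * Real.cos (t*s*x) = s * (G (s*x) * Real.cos (t*(s*x))) := by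
    intro x
    rw [hGdef]
    simp only
    rw [mul_div_cancel_left₀ _ hs.ne', show t*(s*x) = t*s*x by ring,
      ← mul_assoc, mul_comm s (c*(1-x^2)^p/s), div_mul_cancel₀ _ hs.ne']
  calc ∫ z in (-s)..s, G z * Real.cos (t*z)
      = s * (s⁻¹ * ∫ z in (-s)..s, G z * Real.cos (t*z)) := by
        field_simp
    _ = s * ∫ x in (-1:ℝ)..1, G (s*x) * Real.cos (t*(s*x)) := by rw [← hcv]
    _ = ∫ x in (-1:ℝ)..1, s * (G (s*x) * Real.cos (t*(s*x))) :=
        (intervalIntegral.integral_const_mul _ _).symm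
    _ = ∫ x in (-1:ℝ)..1, c*(1-x^2)^p * Real.cos (t*s*x) :=
        intervalIntegral.integral_congr fun x _ => (hpt x).symm

lemma gammaHalfFormula (m : ℕ) :
    Real.Gamma ((m:ℝ)+1/2) = Real.sqrt π * (2*m).factorial / (4^m * m.factorial) := by
  have h := Real.Gamma_mul_Gamma_add_half ((m:ℝ)+1/2)
  rw [show (m:ℝ)+1/2+1/2 = (m:ℝ)+1 by ring, Real.Gamma_nat_eq_factorial m,
    show (2:ℝ)*((m:ℝ)+1/2) = ((2*m:ℕ):ℝ)+1 by push_cast; ring,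
    Real.Gamma_nat_eq_factorial (2*m),
    show (1:ℝ)-(((2*m:ℕ):ℝ)+1) = -((2*m:ℕ):ℝ) by ring] at h
  have h2 : (2:ℝ) ^ (-((2*m:ℕ):ℝ)) = ((4:ℝ)^m)⁻¹ := by
    rw [Real.rpow_neg (by norm_num), Real.rpow_natCast]
    congr 1
    rw [pow_mul]
    norm_num
  rw [h2] at h
  have hm : (0:ℝ) < m.factorial := by positivity
  field_simp at h ⊢
  linarith [h]

lemma termC (n : ℕ) (hn : 0 < n) (t a : ℝ) (ha2 : a^2 = t^2*((n:ℝ)+2)) (m : ℕ) :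
    (Real.Gamma ((n:ℝ)/2+1) / (Real.Gamma (((n:ℝ)+1)/2) * Real.sqrt π)) *
        ((-1)^m * a^(2*m) / ((2*m).factorial)) *
        (Real.Gamma ((m:ℝ)+1/2) * Real.Gamma (((n:ℝ)+1)/2) / Real.Gamma ((n:ℝ)/2+1+m))
    = (-(((n:ℝ)+2)) * t^2 / 4)^m * Real.Gamma ((n:ℝ)/2+1) /
        ((m.factorial:ℝ) * Real.Gamma ((n:ℝ)/2+1+(m:ℝ))) := by
  have hsp : (0:ℝ) < Real.sqrt π := Real.sqrt_pos.2 Real.pi_pos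
  have hG2 : (0:ℝ) < Real.Gamma (((n:ℝ)+1)/2) := Real.Gamma_pos_of_pos (by positivity)
  have hG3 : (0:ℝ) < Real.Gamma ((n:ℝ)/2+1+m) := Real.Gamma_pos_of_pos (by positivity)
  have hfm : (0:ℝ) < (m.factorial:ℝ) := by positivity
  have hf2m : (0:ℝ) < ((2*m).factorial:ℝ) := by positivity
  have hpow : (-(((n:ℝ)+2)) * t^2 / 4)^m = (-1)^m * (t^2*((n:ℝ)+2))^m / 4^m := by
    rw [show -(((n:ℝ)+2)) * t^2 / 4 = (-1) * (t^2*((n:ℝ)+2)) * (4:ℝ)⁻¹ by ring,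
      mul_pow, mul_pow, inv_pow, div_eq_mul_inv]
  rw [pow_mul, ha2, gammaHalfFormula, hpow]
  set X : ℝ := (t^2*((n:ℝ)+2))^m with hX
  field_simp

/-- For every positive integer `n` and every real `t`, the characteristic function of the
rescaled coordinate `z = √(n+2) · x₁` admits the hypergeometric series representation
`φ_{n,Z}(t) = Σ_{k=0}^∞ (−(n+2)t²/4)^k · Γ(n/2+1) / (k! · Γ(n/2+1+k))`. -/
theorem charFun_eq_hypergeometric_series (n : ℕ) (hn : 0 < n) (t : ℝ) :
    ∫ z in (-(Real.sqrt ((n : ℝ) + 2)))..(Real.sqrt ((n : ℝ) + 2)),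
        (rescaledDensity n z : ℂ) * Complex.exp (Complex.I * (t : ℂ) * (z : ℂ)) =
      ∑' k : ℕ,
        (((-(((n : ℝ) + 2)) * t ^ 2 / 4) ^ k * Real.Gamma ((n : ℝ) / 2 + 1) /
          ((k.factorial : ℝ) * Real.Gamma ((n : ℝ) / 2 + 1 + (k : ℝ))) : ℝ) : ℂ) := by
  have hp : (0:ℝ) ≤ ((n:ℝ)-1)/2 := by
    have : (1:ℝ) ≤ n := by exact_mod_cast hn
    linarith
  have ha2 : (t * Real.sqrt ((n:ℝ)+2))^2 = t^2*((n:ℝ)+2) := by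
    rw [mul_pow, Real.sq_sqrt (by positivity : (0:ℝ) ≤ (n:ℝ)+2)]
  rw [stepA n hn t, stepB _ hp (t * Real.sqrt ((n:ℝ)+2)), Complex.ofReal_tsum]
  refine tsum_congr fun m => ?_
  rw [Complex.ofReal_inj]
  rw [moment n m hn]
  exact termC n hn t _ ha2 m
end

section
/- For every real t, the characteristic functions φ_{n,Z}(t) = ∫_{-√(n+2)}^{√(n+2)} g_n(z) e^{itz} dz converge as n → ∞ to e^{−t²/2}, the characteristic function of the standard normal distribution. -/
open Real Filter

open MeasureTheory

lemma gamma_midpoint_sq (x : ℝ) (hx : 0 < x) :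
    Real.Gamma (x + 1/2) ^ 2 ≤ Real.Gamma x * Real.Gamma (x + 1) := by
  have h := Real.convexOn_log_Gamma.2 (Set.mem_Ioi.2 hx) (show x+1 ∈ Set.Ioi 0 by simp; linarith)
    (by norm_num : (0:ℝ) ≤ 1/2) (by norm_num : (0:ℝ) ≤ 1/2) (by norm_num)
  simp only [Function.comp, smul_eq_mul] at h
  have hmid : (1/2 : ℝ) * x + 1/2 * (x + 1) = x + 1/2 := by ring
  rw [hmid] at h
  have h1 : 0 < Real.Gamma x := Real.Gamma_pos_of_pos hx
  have h2 : 0 < Real.Gamma (x + 1) := Real.Gamma_pos_of_pos (by linarith)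
  have h3 : 0 < Real.Gamma (x + 1/2) := Real.Gamma_pos_of_pos (by linarith)
  have := Real.exp_le_exp.2 h
  rw [Real.exp_log h3] at this
  calc Real.Gamma (x+1/2)^2 ≤ (Real.exp (1/2 * Real.log (Real.Gamma x) + 1/2 * Real.log (Real.Gamma (x+1))))^2 := by
        exact pow_le_pow_left₀ h3.le this 2
    _ = Real.Gamma x * Real.Gamma (x+1) := by
        rw [← Real.exp_nat_mul]
        rw [show (2:ℕ) * (1/2 * Real.log (Real.Gamma x) + 1/2 * Real.log (Real.Gamma (x+1))) = Real.log (Real.Gamma x) + Real.log (Real.Gamma (x+1)) by push_cast; ring]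
        rw [Real.exp_add, Real.exp_log h1, Real.exp_log h2]

noncomputable def gr (n : ℕ) : ℝ := Real.Gamma ((n:ℝ)/2 + 1) / Real.Gamma (((n:ℝ)+1)/2)

lemma gr_bounds (n : ℕ) : Real.sqrt ((n:ℝ)/2) ≤ gr n ∧ gr n ≤ Real.sqrt (((n:ℝ)+1)/2) := by
  have hG1 : 0 < Real.Gamma (((n:ℝ)+1)/2) := Real.Gamma_pos_of_pos (by positivity)
  have hG2 : 0 < Real.Gamma ((n:ℝ)/2 + 1) := Real.Gamma_pos_of_pos (by positivity)
  have hgr : 0 < gr n := div_pos hG2 hG1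
  have hupper : gr n ^ 2 ≤ ((n:ℝ)+1)/2 := by
    have h := gamma_midpoint_sq (((n:ℝ)+1)/2) (by positivity)
    rw [show ((n:ℝ)+1)/2 + 1/2 = (n:ℝ)/2 + 1 by ring] at h
    have hadd : Real.Gamma (((n:ℝ)+1)/2 + 1) = ((n:ℝ)+1)/2 * Real.Gamma (((n:ℝ)+1)/2) :=
      Real.Gamma_add_one (by positivity)
    rw [hadd] at h
    rw [gr, div_pow, div_le_iff₀ (by positivity)]
    calc Real.Gamma ((n:ℝ)/2+1)^2 ≤ Real.Gamma (((n:ℝ)+1)/2) * (((n:ℝ)+1)/2 * Real.Gamma (((n:ℝ)+1)/2)) := h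
      _ = ((n:ℝ)+1)/2 * Real.Gamma (((n:ℝ)+1)/2)^2 := by ring
  have hlower : (n:ℝ)/2 ≤ gr n ^ 2 := by
    rcases Nat.eq_zero_or_pos n with h0 | hn
    · subst h0; simpa using sq_nonneg (gr 0)
    · have hnpos : (0:ℝ) < (n:ℝ)/2 := by positivity
      have h := gamma_midpoint_sq ((n:ℝ)/2) hnpos
      rw [show (n:ℝ)/2 + 1/2 = ((n:ℝ)+1)/2 by ring] at h
      have hG0 : 0 < Real.Gamma ((n:ℝ)/2) := Real.Gamma_pos_of_pos hnpos
      have hadd : Real.Gamma ((n:ℝ)/2 + 1) = (n:ℝ)/2 * Real.Gamma ((n:ℝ)/2) :=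
        Real.Gamma_add_one (ne_of_gt hnpos)
      -- G1² ≤ Γ(n/2) * G2 = (G2/(n/2)) * G2
      rw [gr, div_pow, le_div_iff₀ (by positivity)]
      have : Real.Gamma ((n:ℝ)/2) = Real.Gamma ((n:ℝ)/2 + 1) / ((n:ℝ)/2) := by
        rw [hadd]; field_simp
      rw [this] at h
      calc (n:ℝ)/2 * Real.Gamma (((n:ℝ)+1)/2)^2 ≤ (n:ℝ)/2 * (Real.Gamma ((n:ℝ)/2+1) / ((n:ℝ)/2) * Real.Gamma ((n:ℝ)/2+1)) := by
            exact mul_le_mul_of_nonneg_left h (by positivity)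
        _ = Real.Gamma ((n:ℝ)/2+1)^2 := by field_simp
  constructor
  · have := Real.sqrt_le_sqrt hlower
    rwa [Real.sqrt_sq hgr.le] at this
  · have := Real.sqrt_le_sqrt hupper
    rwa [Real.sqrt_sq hgr.le] at this

lemma tendsto_nat_quot (a b : ℝ) :
    Tendsto (fun n : ℕ => ((n:ℝ) + a) / ((n:ℝ) + b)) atTop (nhds 1) := by
  have hb : Tendsto (fun n : ℕ => (n:ℝ) + b) atTop atTop :=
    tendsto_atTop_add_const_right _ b tendsto_natCast_atTop_atTop
  have h0 : Tendsto (fun n : ℕ => (a - b) / ((n:ℝ) + b)) atTop (nhds 0) :=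
    Tendsto.div_atTop tendsto_const_nhds hb
  have h1 : Tendsto (fun n : ℕ => 1 + (a - b) / ((n:ℝ) + b)) atTop (nhds 1) := by
    simpa using h0.const_add 1
  refine h1.congr' ?_
  filter_upwards [hb.eventually_gt_atTop 0] with n hn
  field_simp
  ring

lemma base_tendsto (c : ℝ) (hc : 0 ≤ c) :
    Tendsto (fun n : ℕ => (1 - c / ((n:ℝ) + 2)) ^ (((n:ℝ) - 1) / 2)) atTop
      (nhds (Real.exp (-c / 2))) := by
  have hnat : Tendsto (fun n : ℕ => (n:ℝ) + 2) atTop atTop :=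
    tendsto_atTop_add_const_right _ 2 tendsto_natCast_atTop_atTop
  have hv : Tendsto (fun n : ℕ => (1 + (-c) / ((n:ℝ) + 2)) ^ ((n:ℝ) + 2)) atTop
      (nhds (Real.exp (-c))) := (tendsto_one_add_div_rpow_exp (-c)).comp hnat
  have he : Tendsto (fun n : ℕ => ((n:ℝ) - 1) / (2 * ((n:ℝ) + 2))) atTop (nhds (1/2)) := by
    have h := (tendsto_nat_quot (-1) 2).div_const 2
    have heq : ∀ n : ℕ, ((n:ℝ) + (-1)) / ((n:ℝ) + 2) / 2 = ((n:ℝ) - 1) / (2 * ((n:ℝ) + 2)) := by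
      intro n; have : ((n:ℝ) + 2) ≠ 0 := by positivity
      field_simp; ring
    simp only [heq] at h
    simpa using h
  have hmain : Tendsto (fun n : ℕ =>
      ((1 + (-c) / ((n:ℝ) + 2)) ^ ((n:ℝ) + 2)) ^ (((n:ℝ) - 1) / (2 * ((n:ℝ) + 2)))) atTop
      (nhds (Real.exp (-c) ^ (1/2 : ℝ))) :=
    hv.rpow he (Or.inl (Real.exp_ne_zero _))
  rw [← Real.exp_mul] at hmain
  rw [show -c * (1/2 : ℝ) = -c/2 by ring] at hmain
  refine hmain.congr' ?_
  filter_upwards [hnat.eventually_ge_atTop c] with n hn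
  have h2 : (0:ℝ) < (n:ℝ) + 2 := by positivity
  have hbase : 0 ≤ 1 + (-c) / ((n:ℝ) + 2) := by
    have : c / ((n:ℝ) + 2) ≤ 1 := by rw [div_le_one h2]; exact hn
    rw [neg_div]; linarith
  rw [← Real.rpow_mul hbase,
    show ((n:ℝ)+2) * (((n:ℝ)-1)/(2*((n:ℝ)+2))) = ((n:ℝ)-1)/2 by field_simp,
    show (1:ℝ) + (-c)/((n:ℝ)+2) = 1 - c/((n:ℝ)+2) by ring]

noncomputable def cc (n : ℕ) : ℝ :=
  Real.Gamma ((n:ℝ)/2 + 1) / (Real.Gamma (((n:ℝ)+1)/2) * Real.sqrt π) / Real.sqrt ((n:ℝ)+2)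

lemma cc_eq (n : ℕ) : cc n = gr n / (Real.sqrt π * Real.sqrt ((n:ℝ)+2)) := by
  rw [cc, gr, div_div, div_div, mul_assoc]

lemma cc_nonneg (n : ℕ) : 0 ≤ cc n := by
  rw [cc_eq]
  have h1 : 0 < Real.Gamma (((n:ℝ)+1)/2) := Real.Gamma_pos_of_pos (by positivity)
  have h2 : 0 < Real.Gamma ((n:ℝ)/2 + 1) := Real.Gamma_pos_of_pos (by positivity)
  have : 0 < gr n := div_pos h2 h1
  positivity

lemma cc_le (n : ℕ) : cc n ≤ Real.sqrt (((n:ℝ)+1) / (2 * π * ((n:ℝ)+2))) := by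
  rw [cc_eq]
  have hd : 0 < Real.sqrt π * Real.sqrt ((n:ℝ)+2) := by positivity
  have h := (gr_bounds n).2
  calc gr n / (Real.sqrt π * Real.sqrt ((n:ℝ)+2))
      ≤ Real.sqrt (((n:ℝ)+1)/2) / (Real.sqrt π * Real.sqrt ((n:ℝ)+2)) := by gcongr
    _ = Real.sqrt ((((n:ℝ)+1)/2) / (π * ((n:ℝ)+2))) := by
        rw [← Real.sqrt_mul Real.pi_pos.le, ← Real.sqrt_div (by positivity)]
    _ = Real.sqrt (((n:ℝ)+1) / (2 * π * ((n:ℝ)+2))) := by rw [div_div, mul_assoc]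

lemma cc_ge (n : ℕ) : Real.sqrt ((n:ℝ) / (2 * π * ((n:ℝ)+2))) ≤ cc n := by
  rw [cc_eq]
  have h := (gr_bounds n).1
  calc Real.sqrt ((n:ℝ) / (2 * π * ((n:ℝ)+2)))
      = Real.sqrt (((n:ℝ)/2) / (π * ((n:ℝ)+2))) := by rw [div_div, mul_assoc]
    _ = Real.sqrt ((n:ℝ)/2) / (Real.sqrt π * Real.sqrt ((n:ℝ)+2)) := by
        rw [← Real.sqrt_mul Real.pi_pos.le, Real.sqrt_div (by positivity)]
    _ ≤ gr n / (Real.sqrt π * Real.sqrt ((n:ℝ)+2)) := by gcongr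

lemma cc_tendsto : Tendsto cc atTop (nhds (Real.sqrt (2*π))⁻¹) := by
  have harg : ∀ a : ℝ, Tendsto (fun n : ℕ => ((n:ℝ)+a) / (2 * π * ((n:ℝ)+2))) atTop
      (nhds ((2*π)⁻¹)) := by
    intro a
    have h := (tendsto_nat_quot a 2).mul_const ((2*π)⁻¹)
    rw [one_mul] at h
    refine h.congr fun n => ?_
    rw [← div_eq_mul_inv, div_div, mul_comm ((n:ℝ)+2) (2*π)]
  have hsq : ∀ a : ℝ, Tendsto (fun n : ℕ => Real.sqrt (((n:ℝ)+a) / (2 * π * ((n:ℝ)+2)))) atTop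
      (nhds (Real.sqrt (2*π))⁻¹) := by
    intro a
    have := (Real.continuous_sqrt.tendsto ((2*π)⁻¹)).comp (harg a)
    rwa [Real.sqrt_inv] at this
  have h0 : Tendsto (fun n : ℕ => Real.sqrt ((n:ℝ) / (2 * π * ((n:ℝ)+2)))) atTop
      (nhds (Real.sqrt (2*π))⁻¹) := by
    have := hsq 0
    simpa using this
  exact tendsto_of_tendsto_of_tendsto_of_le_of_le h0 (hsq 1) cc_ge cc_le

lemma rescaled_eq (n : ℕ) (z : ℝ) (hz : |z| ≤ Real.sqrt ((n:ℝ)+2)) :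
    rescaledDensity n z = cc n * (1 - z^2/((n:ℝ)+2)) ^ (((n:ℝ)-1)/2) := by
  have hs : 0 < Real.sqrt ((n:ℝ)+2) := Real.sqrt_pos.2 (by positivity)
  have hmem : z / Real.sqrt ((n:ℝ)+2) ∈ Set.Icc (-1:ℝ) 1 := by
    rw [Set.mem_Icc, ← abs_le, abs_div, abs_of_pos hs, div_le_one hs]; exact hz
  rw [rescaledDensity, if_pos hz, ballCoordDensity, if_pos hmem, div_pow,
    Real.sq_sqrt (by positivity : (0:ℝ) ≤ (n:ℝ)+2), cc]
  ring

lemma sq_le_of_abs_le {z : ℝ} {n : ℕ} (hz : |z| ≤ Real.sqrt ((n:ℝ)+2)) :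
    z^2 ≤ (n:ℝ)+2 := by
  have := pow_le_pow_left₀ (abs_nonneg z) hz 2
  rwa [sq_abs, Real.sq_sqrt (by positivity : (0:ℝ) ≤ (n:ℝ)+2)] at this

lemma rescaled_le (n : ℕ) (z : ℝ) (hn : 4 ≤ n) :
    rescaledDensity n z ≤ Real.exp (-(1/4) * z^2) := by
  by_cases hz : |z| ≤ Real.sqrt ((n:ℝ)+2)
  · rw [rescaled_eq n z hz]
    have h2 : (0:ℝ) < (n:ℝ)+2 := by positivity
    have hw1 : z^2/((n:ℝ)+2) ≤ 1 := by
      rw [div_le_one h2]; exact sq_le_of_abs_le hz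
    have hw0 : 0 ≤ z^2/((n:ℝ)+2) := by positivity
    have hp : 0 ≤ ((n:ℝ)-1)/2 := by
      have : (4:ℝ) ≤ n := by exact_mod_cast hn
      linarith
    have hcc : cc n ≤ 1 := by
      refine (cc_le n).trans ?_
      have harg : ((n:ℝ)+1)/(2*π*((n:ℝ)+2)) ≤ 1 := by
        rw [div_le_one (by positivity)]
        nlinarith [Real.pi_gt_three]
      exact (Real.sqrt_le_sqrt harg).trans_eq Real.sqrt_one
    have hbase : (1 - z^2/((n:ℝ)+2)) ^ (((n:ℝ)-1)/2) ≤ Real.exp (-(1/4) * z^2) := by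
      have h1 : 1 - z^2/((n:ℝ)+2) ≤ Real.exp (-(z^2/((n:ℝ)+2))) := by
        linarith [Real.add_one_le_exp (-(z^2/((n:ℝ)+2)))]
      have h3 := Real.rpow_le_rpow (by linarith) h1 hp
      rw [← Real.exp_mul] at h3
      refine h3.trans (Real.exp_le_exp.2 ?_)
      have hn4 : (4:ℝ) ≤ (n:ℝ) := by exact_mod_cast hn
      have key : z^2/4 ≤ z^2/((n:ℝ)+2) * (((n:ℝ)-1)/2) := by
        rw [div_mul_div_comm, div_le_div_iff₀ (by norm_num) (by positivity)]
        nlinarith [sq_nonneg z]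
      linarith
    calc cc n * (1 - z^2/((n:ℝ)+2)) ^ (((n:ℝ)-1)/2)
        ≤ 1 * Real.exp (-(1/4) * z^2) := by
          apply mul_le_mul hcc hbase (Real.rpow_nonneg (by linarith) _) one_pos.le
      _ = Real.exp (-(1/4) * z^2) := one_mul _
  · rw [rescaledDensity, if_neg hz]; positivity

lemma rescaled_nonneg (n : ℕ) (z : ℝ) : 0 ≤ rescaledDensity n z := by
  rw [rescaledDensity]
  split_ifs with hz
  · apply div_nonneg _ (Real.sqrt_nonneg _)
    rw [ballCoordDensity]
    split_ifs with hm
    · apply mul_nonneg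
      · have h1 : 0 < Real.Gamma (((n:ℝ)+1)/2) := Real.Gamma_pos_of_pos (by positivity)
        have h2 : 0 < Real.Gamma ((n:ℝ)/2 + 1) := Real.Gamma_pos_of_pos (by positivity)
        positivity
      · apply Real.rpow_nonneg
        rcases Set.mem_Icc.1 hm with ⟨ha, hb⟩
        nlinarith
    · exact le_refl 0
  · exact le_refl 0

lemma rescaled_pt (z : ℝ) :
    Tendsto (fun n : ℕ => rescaledDensity n z) atTop
      (nhds ((Real.sqrt (2*π))⁻¹ * Real.exp (-(z^2)/2))) := by
  have h := cc_tendsto.mul (base_tendsto (z^2) (sq_nonneg z))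
  rw [show -(z^2)/2 = -z^2/2 by ring]
  refine h.congr' ?_
  filter_upwards [eventually_ge_atTop ⌈z^2⌉₊] with n hn
  have hz2 : z^2 ≤ (n:ℝ) + 2 := by
    have h1 : z^2 ≤ (⌈z^2⌉₊ : ℝ) := Nat.le_ceil _
    have h2 : ((⌈z^2⌉₊ : ℕ) : ℝ) ≤ (n:ℝ) := by exact_mod_cast hn
    linarith
  have habs : |z| ≤ Real.sqrt ((n:ℝ)+2) := by
    rw [← Real.sqrt_sq_eq_abs]
    exact Real.sqrt_le_sqrt hz2
  exact (rescaled_eq n z habs).symm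

lemma norm_cexp_I_mul (t z : ℝ) : ‖Complex.exp (Complex.I * (t:ℂ) * (z:ℂ))‖ = 1 := by
  rw [show Complex.I * (t:ℂ) * (z:ℂ) = ((t*z : ℝ):ℂ) * Complex.I by push_cast; ring]
  exact Complex.norm_exp_ofReal_mul_I _

lemma rescaled_measurable (n : ℕ) (hn : 1 ≤ n) : Measurable (rescaledDensity n) := by
  have hp : (0:ℝ) ≤ ((n:ℝ)-1)/2 := by
    have : (1:ℝ) ≤ (n:ℝ) := by exact_mod_cast hn
    linarith
  have hball : Measurable (ballCoordDensity n) := by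
    apply Measurable.ite measurableSet_Icc
    · apply Measurable.const_mul
      have hc : Continuous fun x : ℝ => (1 - x^2) ^ (((n:ℝ)-1)/2) := by
        apply Continuous.rpow_const (by continuity)
        exact fun x => Or.inr hp
      exact hc.measurable
    · exact measurable_const
  apply Measurable.ite
  · exact measurableSet_le (continuous_abs.measurable) measurable_const
  · exact (hball.comp (measurable_id.div_const _)).div_const _
  · exact measurable_const

lemma gauss_integral_eq (t : ℝ) :
    ∫ z : ℝ, (((Real.sqrt (2*π))⁻¹ * Real.exp (-(z^2)/2) : ℝ) : ℂ) *
      Complex.exp (Complex.I * (t:ℂ) * (z:ℂ)) = ((Real.exp (-t^2/2) : ℝ) : ℂ) := by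
  have h := fourierIntegral_gaussian (b := (1/2 : ℂ)) (by norm_num) (t : ℂ)
  have heq : ∀ z : ℝ, (((Real.sqrt (2*π))⁻¹ * Real.exp (-(z^2)/2) : ℝ) : ℂ) *
      Complex.exp (Complex.I * (t:ℂ) * (z:ℂ)) =
      (((Real.sqrt (2*π))⁻¹ : ℝ) : ℂ) *
        (Complex.exp (Complex.I * (t:ℂ) * (z:ℂ)) * Complex.exp (-(1/2) * (z:ℂ)^2)) := by
    intro z
    rw [show (-(1/2) * (z:ℂ)^2) = ((-(z^2)/2 : ℝ) : ℂ) by push_cast; ring]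
    rw [← Complex.ofReal_exp]
    push_cast
    ring
  simp_rw [heq]
  rw [integral_const_mul, h]
  have hsq : ((π : ℂ) / (1/2)) ^ (1/2 : ℂ) = ((Real.sqrt (2*π) : ℝ) : ℂ) := by
    rw [show ((π:ℂ)/(1/2)) = (((2*π : ℝ)):ℂ) by push_cast; ring]
    rw [show ((1/2 : ℂ)) = (((1/2 : ℝ)):ℂ) by norm_num]
    rw [← Complex.ofReal_cpow (by positivity), Real.rpow_def_of_pos (by positivity)]
    rw [Real.sqrt_eq_rpow, Real.rpow_def_of_pos (by positivity)]
  rw [hsq]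
  rw [show (-(t:ℂ)^2/(4*(1/2))) = ((-t^2/2 : ℝ):ℂ) by push_cast; ring, ← Complex.ofReal_exp]
  rw [← Complex.ofReal_mul, ← Complex.ofReal_mul]
  congr 1
  have hne : Real.sqrt (2*π) ≠ 0 := by
    rw [Real.sqrt_ne_zero' ]
    positivity
  field_simp

/-- For every real `t`, the characteristic functions
`φ_{n,Z}(t) = ∫_{-√(n+2)}^{√(n+2)} g_n(z) e^{itz} dz` converge as `n → ∞` to
`e^{−t²/2}`, the characteristic function of the standard normal distribution. -/
theorem tendsto_charFun_gaussian (t : ℝ) :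
    Tendsto
      (fun n : ℕ =>
        ∫ z in (-(Real.sqrt ((n : ℝ) + 2)))..(Real.sqrt ((n : ℝ) + 2)),
          (rescaledDensity n z : ℂ) * Complex.exp (Complex.I * (t : ℂ) * (z : ℂ)))
      atTop (nhds ((Real.exp (-t ^ 2 / 2) : ℝ) : ℂ)) := by
  have hint : ∀ n : ℕ,
      (∫ z in (-(Real.sqrt ((n:ℝ)+2)))..(Real.sqrt ((n:ℝ)+2)),
        (rescaledDensity n z : ℂ) * Complex.exp (Complex.I * (t:ℂ) * (z:ℂ)))
      = ∫ z : ℝ, (rescaledDensity n z : ℂ) * Complex.exp (Complex.I * (t:ℂ) * (z:ℂ)) := by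
    intro n
    have hs : 0 < Real.sqrt ((n:ℝ)+2) := Real.sqrt_pos.2 (by positivity)
    rw [intervalIntegral.integral_of_le (by linarith)]
    apply setIntegral_eq_integral_of_ae_compl_eq_zero
    have hae : ∀ᵐ z : ℝ, z ≠ -(Real.sqrt ((n:ℝ)+2)) := by
      rw [ae_iff]
      have hset : {z : ℝ | ¬ z ≠ -(Real.sqrt ((n:ℝ)+2))} = {-(Real.sqrt ((n:ℝ)+2))} := by
        ext z; simp
      rw [hset]
      exact measure_singleton _
    filter_upwards [hae] with z hz hmem
    have habs : ¬ |z| ≤ Real.sqrt ((n:ℝ)+2) := by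
      rw [Set.mem_Ioc, not_and_or] at hmem
      rw [not_le, lt_abs]
      rcases hmem with h | h
      · push_neg at h
        right
        rcases lt_or_eq_of_le h with h' | h'
        · linarith
        · exact absurd h' hz
      · push_neg at h
        left; exact h
    rw [rescaledDensity, if_neg habs]
    simp
  simp only [hint]
  rw [show ((Real.exp (-t^2/2) : ℝ):ℂ) =
      ∫ z : ℝ, (((Real.sqrt (2*π))⁻¹ * Real.exp (-(z^2)/2) : ℝ) : ℂ) *
        Complex.exp (Complex.I * (t:ℂ)*(z:ℂ)) from (gauss_integral_eq t).symm]
  apply (tendsto_add_atTop_iff_nat 4).1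
  apply tendsto_integral_of_dominated_convergence (bound := fun z => Real.exp (-(1/4) * z^2))
  · intro m
    exact ((Complex.measurable_ofReal.comp (rescaled_measurable (m+4) (by omega))).mul
      (Complex.continuous_exp.comp (by continuity)).measurable).aestronglyMeasurable
  · exact integrable_exp_neg_mul_sq (by norm_num)
  · intro m
    filter_upwards with z
    rw [norm_mul, norm_cexp_I_mul, mul_one, Complex.norm_real, Real.norm_eq_abs,
      abs_of_nonneg (rescaled_nonneg _ _)]
    exact rescaled_le _ z (by omega)
  · filter_upwards with z
    have h1 := (rescaled_pt z).comp (tendsto_add_atTop_nat 4)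
    exact ((Complex.continuous_ofReal.tendsto _).comp h1).mul_const
      (Complex.exp (Complex.I * (t:ℂ)*(z:ℂ)))
end

section
/- For every real z, the rescaled densities converge pointwise to the standard normal density: lim_{n → ∞} g_n(z) = e^{−z²/2} / √(2π), where g_n(z) = f_n(z/√(n+2)) / √(n+2) for |z| ≤ √(n+2) and g_n(z) = 0 otherwise. -/
open Real Filter
open Topology

private lemma gammaSqLe {t : ℝ} (ht : 1/2 < t) :
    Real.Gamma t ^ 2 ≤ Real.Gamma (t - 1/2) * Real.Gamma (t + 1/2) := by
  have h1 : (0:ℝ) < t - 1/2 := by linarith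
  have h2 : (0:ℝ) < t + 1/2 := by linarith
  have ht0 : (0:ℝ) < t := by linarith
  have hc := Real.convexOn_log_Gamma.2 (Set.mem_Ioi.mpr h1) (Set.mem_Ioi.mpr h2)
    (by norm_num : (0:ℝ) ≤ 1/2) (by norm_num : (0:ℝ) ≤ 1/2) (by norm_num)
  have hmid : (1/2:ℝ) • (t - 1/2) + (1/2:ℝ) • (t + 1/2) = t := by
    simp only [smul_eq_mul]; ring
  rw [hmid] at hc
  simp only [Function.comp, smul_eq_mul] at hc
  have hl : Real.log (Real.Gamma t ^ 2) ≤
      Real.log (Real.Gamma (t - 1/2) * Real.Gamma (t + 1/2)) := by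
    rw [Real.log_pow, Real.log_mul (Real.Gamma_pos_of_pos h1).ne'
      (Real.Gamma_pos_of_pos h2).ne']
    push_cast
    linarith
  exact (Real.log_le_log_iff (by positivity) (by positivity)).mp hl

private lemma cSq_upper (n : ℕ) :
    (Real.Gamma ((n:ℝ)/2 + 1) / Real.Gamma (((n:ℝ)+1)/2)) ^ 2 ≤ ((n:ℝ)+1)/2 := by
  have hB : (0:ℝ) < Real.Gamma (((n:ℝ)+1)/2) := Real.Gamma_pos_of_pos (by positivity)
  have key : Real.Gamma ((n:ℝ)/2 + 1) ^ 2 ≤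
      Real.Gamma (((n:ℝ)+1)/2) ^ 2 * (((n:ℝ)+1)/2) := by
    have h := gammaSqLe (t := (n:ℝ)/2 + 1)
      (by have : (0:ℝ) ≤ n := Nat.cast_nonneg n; linarith)
    have e1 : (n:ℝ)/2 + 1 - 1/2 = ((n:ℝ)+1)/2 := by ring
    have e2 : (n:ℝ)/2 + 1 + 1/2 = ((n:ℝ)+1)/2 + 1 := by ring
    rw [e1, e2, Real.Gamma_add_one (s := ((n:ℝ)+1)/2) (by positivity)] at h
    calc Real.Gamma ((n:ℝ)/2 + 1) ^ 2 ≤ _ := h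
    _ = Real.Gamma (((n:ℝ)+1)/2) ^ 2 * (((n:ℝ)+1)/2) := by ring
  rw [div_pow, div_le_iff₀ (by positivity)]
  linarith [key]

private lemma cSq_lower (n : ℕ) :
    (n:ℝ)/2 ≤ (Real.Gamma ((n:ℝ)/2 + 1) / Real.Gamma (((n:ℝ)+1)/2)) ^ 2 := by
  rcases Nat.eq_zero_or_pos n with h0 | hn
  · subst h0; simp; positivity
  have hn1 : (1:ℝ) ≤ (n:ℝ) := by exact_mod_cast hn
  have hA : (0:ℝ) < Real.Gamma ((n:ℝ)/2 + 1) := Real.Gamma_pos_of_pos (by positivity)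
  have hB : (0:ℝ) < Real.Gamma (((n:ℝ)+1)/2) := Real.Gamma_pos_of_pos (by positivity)
  have hG : Real.Gamma ((n:ℝ)/2 + 1) = ((n:ℝ)/2) * Real.Gamma ((n:ℝ)/2) :=
    Real.Gamma_add_one (by positivity)
  have hGpos : (0:ℝ) < Real.Gamma ((n:ℝ)/2) := Real.Gamma_pos_of_pos (by positivity)
  have h := gammaSqLe (t := ((n:ℝ)+1)/2) (by linarith)
  have e1 : ((n:ℝ)+1)/2 - 1/2 = (n:ℝ)/2 := by ring
  have e2 : ((n:ℝ)+1)/2 + 1/2 = (n:ℝ)/2 + 1 := by ring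
  rw [e1, e2] at h
  rw [div_pow, le_div_iff₀ (by positivity)]
  have key : Real.Gamma (((n:ℝ)+1)/2) ^ 2 * ((n:ℝ)/2) ≤ Real.Gamma ((n:ℝ)/2 + 1) ^ 2 := by
    calc Real.Gamma (((n:ℝ)+1)/2) ^ 2 * ((n:ℝ)/2)
        ≤ (Real.Gamma ((n:ℝ)/2) * Real.Gamma ((n:ℝ)/2 + 1)) * ((n:ℝ)/2) :=
          mul_le_mul_of_nonneg_right h (by positivity)
    _ = Real.Gamma ((n:ℝ)/2 + 1) ^ 2 := by rw [hG]; ring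
  linarith

/-- For every real `z`, the rescaled densities converge pointwise to the standard
normal density: `lim_{n → ∞} g_n(z) = e^{−z²/2}/√(2π)`. -/
theorem tendsto_rescaledDensity_gaussian (z : ℝ) :
    Tendsto (fun n : ℕ => rescaledDensity n z) atTop
      (nhds (Real.exp (-z ^ 2 / 2) / Real.sqrt (2 * π))) := by
  have hcpos : ∀ n : ℕ, 0 < Real.Gamma ((n:ℝ)/2 + 1) / Real.Gamma (((n:ℝ)+1)/2) :=
    fun n => div_pos (Real.Gamma_pos_of_pos (by positivity))
      (Real.Gamma_pos_of_pos (by positivity))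
  set c : ℕ → ℝ := fun n => Real.Gamma ((n:ℝ)/2 + 1) / Real.Gamma (((n:ℝ)+1)/2) with hcdef
  -- Step 1 : c n ^ 2 / (n+2) → 1/2
  have hq : Tendsto (fun n : ℕ => c n ^ 2 / ((n:ℝ)+2)) atTop (𝓝 (1/2)) := by
    have hlow : Tendsto (fun n : ℕ => (n:ℝ)/((n:ℝ)+2) * (1/2)) atTop (𝓝 (1/2)) := by
      have := (tendsto_natCast_div_add_atTop (2:ℝ)).mul_const (1/2)
      rwa [one_mul] at this
    refine tendsto_of_tendsto_of_tendsto_of_le_of_le hlow tendsto_const_nhds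
      (fun n => ?_) (fun n => ?_)
    · have h2 : (0:ℝ) < (n:ℝ)+2 := by positivity
      have : (n:ℝ)/((n:ℝ)+2) * (1/2) = ((n:ℝ)/2)/((n:ℝ)+2) := by ring
      rw [this]
      exact div_le_div_of_nonneg_right (cSq_lower n) h2.le |>.trans_eq rfl
    · have h2 : (0:ℝ) < (n:ℝ)+2 := by positivity
      rw [div_le_iff₀ h2]
      have := cSq_upper n
      linarith
  -- Step 2 : c n / sqrt (n+2) → sqrt (1/2)
  have hKc : Tendsto (fun n : ℕ => c n / Real.sqrt ((n:ℝ)+2)) atTop (𝓝 (Real.sqrt (1/2))) := by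
    have := (Real.continuous_sqrt.tendsto (1/2)).comp hq
    refine this.congr fun n => ?_
    simp only [Function.comp]
    rw [Real.sqrt_div (sq_nonneg _), Real.sqrt_sq (hcpos n).le]
  -- Step 3 : prefactor → 1 / sqrt (2π)
  have hval : Real.sqrt (1/2) * (Real.sqrt π)⁻¹ = 1 / Real.sqrt (2*π) := by
    rw [show (1/2:ℝ) = 2⁻¹ by norm_num, Real.sqrt_inv,
      Real.sqrt_mul (by norm_num : (0:ℝ) ≤ 2), one_div, mul_inv]
  have hK : Tendsto (fun n : ℕ => c n / Real.sqrt ((n:ℝ)+2) * (Real.sqrt π)⁻¹) atTop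
      (𝓝 (1 / Real.sqrt (2*π))) := by
    rw [← hval]; exact hKc.mul_const _
  -- Step 4 : the power factor → exp (-z²/2)
  have hlog : Tendsto (fun n : ℕ => ((n:ℝ)+2) * Real.log (1 + (-z^2)/((n:ℝ)+2))) atTop
      (𝓝 (-z^2)) :=
    (Real.tendsto_mul_log_one_add_div_atTop (-z^2)).comp
      (tendsto_atTop_add_const_right atTop 2 tendsto_natCast_atTop_atTop)
  have hr : Tendsto (fun n : ℕ => ((n:ℝ)-1)/(2*((n:ℝ)+2))) atTop (𝓝 (1/2)) := by
    have h1 : Tendsto (fun n : ℕ => (n:ℝ)/((n:ℝ)+2) * (1/2)) atTop (𝓝 (1/2)) := by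
      have := (tendsto_natCast_div_add_atTop (2:ℝ)).mul_const (1/2)
      rwa [one_mul] at this
    have h2 : Tendsto (fun n : ℕ => (2*((n:ℝ)+2))⁻¹) atTop (𝓝 0) := by
      apply Tendsto.inv_tendsto_atTop
      exact Tendsto.const_mul_atTop two_pos
        (tendsto_atTop_add_const_right atTop 2 tendsto_natCast_atTop_atTop)
    have h3 := h1.sub h2
    rw [sub_zero] at h3
    refine h3.congr fun n => ?_
    have h4 : ((n:ℝ)+2) ≠ 0 := by positivity
    field_simp
  have hmul := hlog.mul hr
  have hA : Tendsto (fun n : ℕ => (1 - z^2/((n:ℝ)+2)) ^ (((n:ℝ)-1)/2)) atTop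
      (𝓝 (Real.exp (-z^2/2))) := by
    have he := (Real.continuous_exp.tendsto _).comp hmul
    rw [show -z^2 * (1/2) = -z^2/2 by ring] at he
    refine he.congr' ?_
    filter_upwards [eventually_ge_atTop ⌈z^2⌉₊] with n hn
    have hz2 : z^2 ≤ (n:ℝ) := le_trans (Nat.le_ceil _) (by exact_mod_cast hn)
    have hpos : 0 < 1 - z^2/((n:ℝ)+2) := by
      rw [sub_pos, div_lt_one (by positivity)]
      linarith
    have heq : 1 + (-z^2)/((n:ℝ)+2) = 1 - z^2/((n:ℝ)+2) := by ring
    simp only [Function.comp, heq]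
    rw [Real.rpow_def_of_pos hpos]
    congr 1
    have h4 : ((n:ℝ)+2) ≠ 0 := by positivity
    field_simp
  -- Assembly
  have hfin := hK.mul hA
  rw [show 1 / Real.sqrt (2*π) * Real.exp (-z^2/2) = Real.exp (-z^2/2) / Real.sqrt (2*π)
    by ring] at hfin
  refine hfin.congr' ?_
  filter_upwards [eventually_ge_atTop ⌈z^2⌉₊] with n hn
  have hz2 : z^2 ≤ (n:ℝ) := le_trans (Nat.le_ceil _) (by exact_mod_cast hn)
  have hs : 0 < Real.sqrt ((n:ℝ)+2) := Real.sqrt_pos.2 (by positivity)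
  have habs : |z| ≤ Real.sqrt ((n:ℝ)+2) := by
    rw [← Real.sqrt_sq_eq_abs]
    exact Real.sqrt_le_sqrt (by linarith)
  have hmem : z / Real.sqrt ((n:ℝ)+2) ∈ Set.Icc (-1:ℝ) 1 := by
    rw [Set.mem_Icc, ← abs_le, abs_div, abs_of_pos hs, div_le_one hs]
    exact habs
  have hx2 : (z / Real.sqrt ((n:ℝ)+2)) ^ 2 = z^2/((n:ℝ)+2) := by
    rw [div_pow, Real.sq_sqrt (by positivity)]
  rw [rescaledDensity, if_pos habs, ballCoordDensity, if_pos hmem, hx2]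
  rw [hcdef]
  ring
end

section
/- For every ε with 0 < ε ≤ 1, the probability mass of f_n outside [−ε, ε] tends to 0 as n → ∞; that is, lim_{n → ∞} ∫_{ε ≤ |x| ≤ 1} Γ(n/2 + 1) / (Γ((n+1)/2) · √π) · (1 - x²)^((n-1)/2) dx = 0. -/
open Real Filter MeasureTheory

private lemma aux_tendsto {r : ℝ} (hr0 : 0 ≤ r) (hr1 : r < 1) :
    Tendsto (fun n : ℕ => (n : ℝ) * r ^ (n - 1) * 2) atTop (nhds 0) := by
  have hg : Tendsto (fun m : ℕ => ((m : ℝ) + 1) * r ^ m) atTop (nhds 0) := by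
    have h1 : Tendsto (fun m : ℕ => (m : ℝ) * r ^ m) atTop (nhds 0) := by
      have := summable_norm_pow_mul_geometric_of_norm_lt_one (R := ℝ) 1
        (by rwa [Real.norm_eq_abs, abs_of_nonneg hr0])
      have h := this.of_norm.tendsto_atTop_zero
      simpa using h
    have h2 : Tendsto (fun m : ℕ => r ^ m) atTop (nhds 0) :=
      tendsto_pow_atTop_nhds_zero_of_lt_one hr0 hr1
    have := h1.add h2
    simpa [add_mul] using this
  have hcomp : Tendsto (fun n : ℕ => ((↑(n - 1) : ℝ) + 1) * r ^ (n - 1)) atTop (nhds 0) :=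
    hg.comp (tendsto_sub_atTop_nat 1)
  have heq : (fun n : ℕ => (n : ℝ) * r ^ (n - 1)) =ᶠ[atTop]
      fun n : ℕ => ((↑(n - 1) : ℝ) + 1) * r ^ (n - 1) := by
    filter_upwards [eventually_ge_atTop 1] with n hn
    have : ((n - 1 : ℕ) : ℝ) + 1 = (n : ℝ) := by
      have : (n - 1 : ℕ) + 1 = n := Nat.succ_pred_eq_of_pos hn
      exact_mod_cast congrArg (Nat.cast : ℕ → ℝ) this
    rw [this]
  have := (hcomp.congr' heq.symm).mul_const 2
  simpa using this

/-- For every `ε` with `0 < ε ≤ 1`, the probability mass of `f_n` outside `[−ε, ε]`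
tends to `0` as `n → ∞`:
`lim_{n → ∞} ∫_{ε ≤ |x| ≤ 1} Γ(n/2+1)/(Γ((n+1)/2)·√π) · (1-x²)^((n-1)/2) dx = 0`. -/
theorem tendsto_tail_mass_zero (ε : ℝ) (hε0 : 0 < ε) (hε1 : ε ≤ 1) :
    Tendsto
      (fun n : ℕ =>
        ∫ x in {x : ℝ | ε ≤ |x| ∧ |x| ≤ 1},
          Real.Gamma ((n : ℝ) / 2 + 1) / (Real.Gamma (((n : ℝ) + 1) / 2) * Real.sqrt π) *
            (1 - x ^ 2) ^ (((n : ℝ) - 1) / 2))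
      atTop (nhds 0) := by
  set S : Set ℝ := {x : ℝ | ε ≤ |x| ∧ |x| ≤ 1} with hSdef
  have hSmeas : MeasurableSet S := by
    have : S = {x : ℝ | ε ≤ |x|} ∩ {x : ℝ | |x| ≤ 1} := by ext x; simp [hSdef, Set.mem_setOf_eq]
    rw [this]
    exact (measurableSet_le measurable_const continuous_abs.measurable).inter
      (measurableSet_le continuous_abs.measurable measurable_const)
  have hSsub : S ⊆ Set.Icc (-1 : ℝ) 1 := by
    intro x hx
    exact abs_le.mp hx.2
  have hSfin : volume S < ⊤ :=
    lt_of_le_of_lt (measure_mono hSsub) (by simp [Real.volume_Icc])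
  have hSle2 : (volume S).toReal ≤ 2 := by
    have h := measure_mono hSsub (μ := volume)
    have h1 : (volume S).toReal ≤ (volume (Set.Icc (-1 : ℝ) 1)).toReal :=
      ENNReal.toReal_mono (by simp [Real.volume_Icc]) h
    have h2 : (volume (Set.Icc (-1 : ℝ) 1)).toReal = 2 := by
      rw [Real.volume_Icc]
      norm_num
    linarith
  have hε2 : 0 ≤ 1 - ε ^ 2 := by nlinarith
  set r : ℝ := Real.sqrt (1 - ε ^ 2) with hrdef
  have hr0 : 0 ≤ r := Real.sqrt_nonneg _
  have hr1 : r < 1 := by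
    have hsq : r ^ 2 = 1 - ε ^ 2 := Real.sq_sqrt hε2
    nlinarith [hr0]
  refine squeeze_zero_norm' ?_ (aux_tendsto hr0 hr1)
  filter_upwards [eventually_ge_atTop 4] with n hn
  have hn1 : (1 : ℕ) ≤ n := by omega
  have hnR : (4 : ℝ) ≤ (n : ℝ) := by exact_mod_cast hn
  -- constant factor bound
  have hGden : 0 < Real.Gamma (((n : ℝ) + 1) / 2) := Real.Gamma_pos_of_pos (by linarith)
  have hsqrtpi : 1 ≤ Real.sqrt π := by
    rw [show (1 : ℝ) = Real.sqrt 1 by simp]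
    exact Real.sqrt_le_sqrt (by linarith [Real.pi_gt_three])
  have hGnum : Real.Gamma ((n : ℝ) / 2 + 1) = (n : ℝ) / 2 * Real.Gamma ((n : ℝ) / 2) :=
    Real.Gamma_add_one (by positivity)
  have hGmono : Real.Gamma ((n : ℝ) / 2) ≤ Real.Gamma (((n : ℝ) + 1) / 2) := by
    apply Real.Gamma_strictMonoOn_Ici.monotoneOn
    · simp only [Set.mem_Ici]; linarith
    · simp only [Set.mem_Ici]; linarith
    · linarith
  have hGnumpos : 0 < Real.Gamma ((n : ℝ) / 2) := Real.Gamma_pos_of_pos (by linarith)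
  have hc : Real.Gamma ((n : ℝ) / 2 + 1) / (Real.Gamma (((n : ℝ) + 1) / 2) * Real.sqrt π)
      ≤ (n : ℝ) := by
    rw [hGnum, div_le_iff₀ (by positivity)]
    calc (n : ℝ) / 2 * Real.Gamma ((n : ℝ) / 2)
        ≤ (n : ℝ) / 2 * Real.Gamma (((n : ℝ) + 1) / 2) := by
          apply mul_le_mul_of_nonneg_left hGmono (by linarith)
      _ ≤ (n : ℝ) * (Real.Gamma (((n : ℝ) + 1) / 2) * Real.sqrt π) := by
          nlinarith [hGden, hsqrtpi, hnR,
            mul_nonneg (mul_nonneg (by linarith : (0:ℝ) ≤ (n:ℝ))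
              hGden.le) (by linarith : (0:ℝ) ≤ Real.sqrt π - 1),
            mul_nonneg (by linarith : (0:ℝ) ≤ (n:ℝ)) hGden.le]
  have hcpos : 0 < Real.Gamma ((n : ℝ) / 2 + 1) /
      (Real.Gamma (((n : ℝ) + 1) / 2) * Real.sqrt π) := by
    rw [hGnum]; positivity
  -- rpow bound on the set
  have hrpow_eq : (1 - ε ^ 2) ^ (((n : ℝ) - 1) / 2) = r ^ (n - 1) := by
    have hcast : ((n : ℝ) - 1) / 2 = (1 / 2 : ℝ) * ((n - 1 : ℕ) : ℝ) := by
      have : ((n - 1 : ℕ) : ℝ) = (n : ℝ) - 1 := by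
        push_cast [Nat.cast_sub hn1]; ring
      rw [this]; ring
    rw [hcast, Real.rpow_mul hε2, ← Real.sqrt_eq_rpow, Real.rpow_natCast]
  have key : ∀ x ∈ S,
      ‖Real.Gamma ((n : ℝ) / 2 + 1) / (Real.Gamma (((n : ℝ) + 1) / 2) * Real.sqrt π) *
        (1 - x ^ 2) ^ (((n : ℝ) - 1) / 2)‖ ≤ (n : ℝ) * r ^ (n - 1) := by
    intro x hx
    obtain ⟨hx1, hx2⟩ := hx
    have hx2' : x ^ 2 ≤ 1 := by
      have := abs_le.mp hx2
      nlinarith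
    have hbase : 0 ≤ 1 - x ^ 2 := by linarith
    have hbase2 : 1 - x ^ 2 ≤ 1 - ε ^ 2 := by
      have : ε ^ 2 ≤ x ^ 2 := by
        have := sq_abs x
        nlinarith [sq_abs x, abs_nonneg x]
      linarith
    have hexp : 0 ≤ ((n : ℝ) - 1) / 2 := by linarith
    have hle : (1 - x ^ 2) ^ (((n : ℝ) - 1) / 2) ≤ r ^ (n - 1) := by
      rw [← hrpow_eq]
      exact Real.rpow_le_rpow hbase hbase2 hexp
    rw [Real.norm_eq_abs, abs_of_nonneg (by positivity)]
    apply mul_le_mul hc hle (Real.rpow_nonneg hbase _) (by linarith)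
  calc ‖∫ x in S, Real.Gamma ((n : ℝ) / 2 + 1) /
          (Real.Gamma (((n : ℝ) + 1) / 2) * Real.sqrt π) *
          (1 - x ^ 2) ^ (((n : ℝ) - 1) / 2)‖
      ≤ (n : ℝ) * r ^ (n - 1) * (volume S).toReal :=
        norm_setIntegral_le_of_norm_le_const hSfin key
    _ ≤ (n : ℝ) * r ^ (n - 1) * 2 := by
        apply mul_le_mul_of_nonneg_left hSle2 (by positivity)
end
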